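/- Let M be a rank-2 matroid on a finite ground set with no loops and no coloops. Then T_M is convex along the portions of the lines x+y=p lying in the positive quadrant. -/

import Mathlib

open Matroid Set

variable {α : Type*}

/-- The rank of a set `X` in a matroid `M`:
the maximum size of an independent subset of `X`. -/
noncomputable def Matroid.rankSet (M : Matroid α) (X : Set α) : ℕ :=
  sSup {n | ∃ I ⊆ X, M.Indep I ∧ I.ncard = n}

/-- The Tutte polynomial of a matroid `M` on a finite type, evaluated at `(x, y) : ℝ × ℝ`:
`T_M(x,y) = Σ_{A ⊆ E} (x−1)^{r(E)−r(A)} · (y−1)^{|A|−r(A)}`. -/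
noncomputable def Matroid.tutte [Fintype α] (M : Matroid α) (x y : ℝ) : ℝ :=
  ∑ A ∈ M.E.toFinite.toFinset.powerset,
    (x - 1) ^ (M.rankSet M.E - M.rankSet ↑A) * (y - 1) ^ (A.card - M.rankSet ↑A)

/-- `T_M` is convex along the portions of the lines `x + y = p` lying in the
positive quadrant. -/
def Matroid.TutteConvexOnLines [Fintype α] (M : Matroid α) : Prop :=
  ∀ t x₁ y₁ x₂ y₂ : ℝ, 0 ≤ t → t ≤ 1 → 0 ≤ x₁ → 0 ≤ y₁ → 0 ≤ x₂ → 0 ≤ y₂ →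
    x₁ + y₁ = x₂ + y₂ →
    M.tutte (t * x₁ + (1 - t) * x₂) (t * y₁ + (1 - t) * y₂) ≤
      t * M.tutte x₁ y₁ + (1 - t) * M.tutte x₂ y₂

section TcxAux



lemma Tcx.powerset_pow [DecidableEq α] (P : Finset α) (z : ℝ) :
    ∑ A ∈ P.powerset, z ^ A.card = (z + 1) ^ P.card := by
  induction P using Finset.induction_on with
  | empty => simp
  | @insert a s ha ih =>
    rw [Finset.sum_powerset_insert ha, Finset.card_insert_of_notMem ha, pow_succ]
    have h2 : ∑ t ∈ s.powerset, z ^ (insert a t).card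
        = ∑ t ∈ s.powerset, z * z ^ t.card := by
      refine Finset.sum_congr rfl fun t ht => ?_
      rw [Finset.card_insert_of_notMem fun hat => ha (Finset.mem_powerset.1 ht hat), pow_succ]
      ring
    rw [h2, ← Finset.mul_sum, ih]; ring

lemma Tcx.sumA (y : ℝ) (n : ℕ) :
    (∑ t ∈ Finset.range n, ((t : ℝ) + 1) * y ^ t) * (y - 1)
      = n * y ^ n - ∑ j ∈ Finset.range n, y ^ j := by
  induction n with
  | zero => simp
  | succ k ih =>
    rw [Finset.sum_range_succ, Finset.sum_range_succ (f := fun j => y ^ j), add_mul, ih]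
    push_cast
    ring

lemma Tcx.sumB (y : ℝ) (n : ℕ) : ∀ N, n ≤ N →
    (∑ t ∈ Finset.range N, ((min (t + 1) n : ℕ) : ℝ) * y ^ t) * (y - 1)
      = n * y ^ N - ∑ j ∈ Finset.range n, y ^ j := by
  refine Nat.le_induction ?_ ?_
  · have : ∀ t ∈ Finset.range n, ((min (t + 1) n : ℕ) : ℝ) * y ^ t = ((t : ℝ) + 1) * y ^ t := by
      intro t ht
      have := Finset.mem_range.1 ht
      rw [min_eq_left (by omega : t + 1 ≤ n)]
      push_cast; ring
    rw [Finset.sum_congr rfl this, Tcx.sumA]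
  · intro N hN ih
    rw [Finset.sum_range_succ, add_mul, ih, min_eq_right (by omega : n ≤ N + 1)]
    ring

lemma Tcx.sumC1 (y : ℝ) (n : ℕ) :
    ∑ j ∈ Finset.range n, (j : ℝ) * y ^ (j - 1) = ∑ t ∈ Finset.range (n - 1), ((t : ℝ) + 1) * y ^ t := by
  cases n with
  | zero => simp
  | succ k =>
    rw [Finset.sum_range_succ']
    simp only [Nat.add_sub_cancel, Nat.cast_zero, zero_mul, add_zero, Nat.succ_sub_one]
    refine Finset.sum_congr rfl fun t _ => ?_
    push_cast; ring

lemma Tcx.sumC2 (y : ℝ) (n : ℕ) :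
    ∑ j ∈ Finset.range n, (j : ℝ) * ((j - 1 : ℕ) : ℝ) * y ^ (j - 1 - 1)
      = ∑ t ∈ Finset.range (n - 2), ((t : ℝ) + 2) * ((t : ℝ) + 1) * y ^ t := by
  match n with
  | 0 => simp
  | 1 => simp
  | (k+2) =>
    rw [Finset.sum_range_succ', Finset.sum_range_succ']
    have h0 : ((0:ℕ) : ℝ) * ((0 - 1 : ℕ) : ℝ) * y ^ (0 - 1 - 1) = 0 := by simp
    have h1 : ((0+1:ℕ) : ℝ) * ((0 + 1 - 1 : ℕ) : ℝ) * y ^ (0 + 1 - 1 - 1) = 0 := by simp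
    rw [h0, h1, add_zero, add_zero]
    have : k + 2 - 2 = k := by omega
    rw [this]
    refine Finset.sum_congr rfl fun t _ => ?_
    simp only [Nat.add_sub_cancel]
    push_cast; ring

/-- Padding a coefficient sum to a longer Finset.range. -/
lemma Tcx.sum_pad (y : ℝ) {N₁ N₂ : ℕ} (h : N₁ ≤ N₂) (c d : ℕ → ℝ)
    (h1 : ∀ t, t < N₁ → c t = d t) (h2 : ∀ t, N₁ ≤ t → d t = 0) :
    ∑ t ∈ Finset.range N₁, c t * y ^ t = ∑ t ∈ Finset.range N₂, d t * y ^ t := by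
  rw [Finset.sum_congr rfl (fun t ht => by rw [h1 t (Finset.mem_range.1 ht)])]
  exact Finset.sum_subset (Finset.range_subset_range.2 h)
    (fun t _ ht => by rw [h2 t (by simpa using ht)]; ring)


open Finset

lemma Tcx.coeff_ineq [DecidableEq α] (C : Finset (Finset α)) (m t : ℕ)
    (hmsum : ∑ P ∈ C, P.card = m)
    (hsize : ∀ P ∈ C, P.card + 2 ≤ m)
    (hm : t + 4 ≤ m) :
    (t+2)*(t+1)*(t+3) + ((∑ P ∈ C, if t + 2 ≤ P.card then 2*(t+1) else 0)
      + (∑ P ∈ C, if t + 3 ≤ P.card then (t+2)*(t+1) else 0))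
      ≤ (t+2)*(t+1)*(∑ P ∈ C, min (t+3) P.card) + (if t = 0 then 2 else 0) := by
  set d : ℕ → ℕ := fun n => if t+2 ≤ n then t*t+4*t+2 else (t+2)*n with hd_def
  have hPC : ∀ n : ℕ, (t+2)*(t+1)*(min (t+3) n)
      = (t+1)*(d n) + ((if t+2 ≤ n then 2*(t+1) else 0)
        + (if t+3 ≤ n then (t+2)*(t+1) else 0)) := by
    intro n
    rcases le_or_gt (t+3) n with h|h
    · rw [min_eq_left h, if_pos (by omega : t+2 ≤ n), if_pos h]
      simp only [hd_def]; rw [if_pos (by omega : t+2 ≤ n)]; ring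
    rcases le_or_gt (t+2) n with h2|h2
    · have hn : n = t+2 := by omega
      subst hn
      rw [min_eq_right (by omega), if_pos le_rfl, if_neg (by omega)]
      simp only [hd_def]; rw [if_pos le_rfl]; ring
    · rw [min_eq_right (by omega), if_neg (by omega), if_neg (by omega)]
      simp only [hd_def]; rw [if_neg (by omega)]; ring
  have hsum : (t+2)*(t+1)*(∑ P ∈ C, min (t+3) P.card)
      = (t+1)*(∑ P ∈ C, d P.card)
        + ((∑ P ∈ C, if t+2 ≤ P.card then 2*(t+1) else 0)
          + (∑ P ∈ C, if t+3 ≤ P.card then (t+2)*(t+1) else 0)) := by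
    rw [Finset.mul_sum]
    rw [Finset.sum_congr rfl fun P _ => hPC P.card]
    rw [Finset.sum_add_distrib, Finset.sum_add_distrib, ← Finset.mul_sum]
  have hd : (t+2)*(t+3) ≤ ∑ P ∈ C, d P.card ∨ (t = 0 ∧ 4 ≤ ∑ P ∈ C, d P.card) := by
    set B := C.filter (fun P => t + 2 ≤ P.card) with hB
    rcases Nat.lt_or_ge B.card 2 with hlt|hge
    · rcases Nat.lt_or_ge B.card 1 with h0|h1
      · -- no large class
        left
        have hB0 : B = ∅ := Finset.card_eq_zero.1 (by omega)
        have hall : ∀ P ∈ C, d P.card = (t+2)*P.card := by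
          intro P hP
          refine if_neg fun hc => ?_
          have : P ∈ B := Finset.mem_filter.2 ⟨hP, hc⟩
          simp [hB0] at this
        rw [Finset.sum_congr rfl hall, ← Finset.mul_sum, hmsum]
        exact Nat.mul_le_mul_left _ (by omega)
      · -- exactly one large class
        left
        obtain ⟨Q, hQ⟩ := Finset.card_eq_one.1 (by omega : B.card = 1)
        have hQB : Q ∈ B := hQ ▸ Finset.mem_singleton_self Q
        have hQC : Q ∈ C := (Finset.mem_filter.1 hQB).1
        have hQcard : t + 2 ≤ Q.card := (Finset.mem_filter.1 hQB).2
        have hothers : ∀ P ∈ C.erase Q, d P.card = (t+2)*P.card := by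
          intro P hP
          refine if_neg fun hc => ?_
          have hPB : P ∈ B := Finset.mem_filter.2 ⟨(Finset.mem_erase.1 hP).2, hc⟩
          rw [hQ, Finset.mem_singleton] at hPB
          exact (Finset.mem_erase.1 hP).1 hPB
        have hsplit : (∑ P ∈ C.erase Q, d P.card) + d Q.card = ∑ P ∈ C, d P.card :=
          Finset.sum_erase_add C _ hQC
        have hsplit2 : (∑ P ∈ C.erase Q, P.card) + Q.card = m := by
          rw [← hmsum]; exact Finset.sum_erase_add C _ hQC
        rw [Finset.sum_congr rfl hothers, ← Finset.mul_sum] at hsplit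
        have hdQ : d Q.card = t*t+4*t+2 := if_pos hQcard
        rw [hdQ] at hsplit
        have hQm := hsize Q hQC
        have h2 : 2 ≤ ∑ P ∈ C.erase Q, P.card := by omega
        have h5 : (t+2)*2 ≤ (t+2)*(∑ P ∈ C.erase Q, P.card) := Nat.mul_le_mul_left _ h2
        rw [show (t+2)*(t+3) = t*t+5*t+6 by ring]
        set X := (t+2)*(∑ P ∈ C.erase Q, P.card) with hX
        clear hX
        set Y := t*t with hY
        clear hY
        omega
    · -- at least two large classes
      obtain ⟨P, Q, hP, hQ, hne⟩ := Finset.one_lt_card_iff.1 (by omega : 1 < B.card)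
      have hPC' : P ∈ C := (Finset.mem_filter.1 hP).1
      have hQC' : Q ∈ C := (Finset.mem_filter.1 hQ).1
      have hdP : d P.card = t*t+4*t+2 := if_pos (Finset.mem_filter.1 hP).2
      have hdQ : d Q.card = t*t+4*t+2 := if_pos (Finset.mem_filter.1 hQ).2
      have hsub2 : ({P, Q} : Finset (Finset α)) ⊆ C := by
        intro R hR
        rcases Finset.mem_insert.1 hR with rfl|hR
        · exact hPC'
        · rw [Finset.mem_singleton] at hR; subst hR; exact hQC'
      have hsum2 : d P.card + d Q.card ≤ ∑ R ∈ C, d R.card := by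
        have h := Finset.sum_le_sum_of_subset_of_nonneg hsub2
          (fun R _ _ => Nat.zero_le (d R.card))
        rwa [Finset.sum_pair hne] at h
      rw [hdP, hdQ] at hsum2
      rcases Nat.eq_zero_or_pos t with rfl|ht
      · right
        exact ⟨rfl, by omega⟩
      · left
        rw [show (t+2)*(t+3) = t*t+5*t+6 by ring]
        have h1t : 1*1 ≤ t*t := Nat.mul_le_mul ht ht
        set Y := t*t with hY
        clear hY
        omega
  rw [hsum]
  rcases hd with h|⟨rfl, h⟩
  · have h6 := Nat.mul_le_mul_left (t+1) h
    have e : (t+1)*((t+2)*(t+3)) = (t+2)*(t+1)*(t+3) := by ring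
    rw [e] at h6
    have h7 : 0 ≤ (if t = 0 then 2 else 0) := Nat.zero_le _
    linarith [h6]
  · simp only [if_pos rfl, reduceIte]
    omega


noncomputable def Tcx.S (C : Finset (Finset α)) (y : ℝ) : ℝ :=
  ∑ P ∈ C, ∑ j ∈ Finset.range P.card, y ^ j

noncomputable def Tcx.S1 (C : Finset (Finset α)) (y : ℝ) : ℝ :=
  ∑ P ∈ C, ∑ j ∈ Finset.range P.card, (j : ℝ) * y ^ (j - 1)

noncomputable def Tcx.S2 (C : Finset (Finset α)) (y : ℝ) : ℝ :=
  ∑ P ∈ C, ∑ j ∈ Finset.range P.card, (j : ℝ) * ((j - 1 : ℕ) : ℝ) * y ^ (j - 1 - 1)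

noncomputable def Tcx.Rt (C : Finset (Finset α)) (t : ℕ) : ℝ :=
  ((∑ P ∈ C, min (t + 1) P.card : ℕ) : ℝ) - (t + 1)

noncomputable def Tcx.R (C : Finset (Finset α)) (m : ℕ) (y : ℝ) : ℝ :=
  ∑ t ∈ Finset.range (m - 1), Tcx.Rt C t * y ^ t

noncomputable def Tcx.R1 (C : Finset (Finset α)) (m : ℕ) (y : ℝ) : ℝ :=
  ∑ t ∈ Finset.range (m - 1), Tcx.Rt C t * ((t : ℝ) * y ^ (t - 1))

noncomputable def Tcx.R2 (C : Finset (Finset α)) (m : ℕ) (y : ℝ) : ℝ :=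
  ∑ t ∈ Finset.range (m - 1), Tcx.Rt C t * ((t : ℝ) * ((t - 1 : ℕ) : ℝ) * y ^ (t - 1 - 1))

noncomputable def Tcx.G (C : Finset (Finset α)) (m : ℕ) (x y : ℝ) : ℝ :=
  (x - 1) ^ 2 + (x - 1) * Tcx.S C y + Tcx.R C m y

noncomputable def Tcx.G1 (C : Finset (Finset α)) (m : ℕ) (p x : ℝ) : ℝ :=
  2 * (x - 1) + Tcx.S C (p - x) - (x - 1) * Tcx.S1 C (p - x) - Tcx.R1 C m (p - x)

noncomputable def Tcx.G2 (C : Finset (Finset α)) (m : ℕ) (p x : ℝ) : ℝ :=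
  2 - 2 * Tcx.S1 C (p - x) + (x - 1) * Tcx.S2 C (p - x) + Tcx.R2 C m (p - x)

section DerivLemmas

variable (C : Finset (Finset α)) (m : ℕ) (p x : ℝ)

lemma Tcx.hasDeriv_S : HasDerivAt (fun x => Tcx.S C (p - x)) (-(Tcx.S1 C (p - x))) x := by
  have h : HasDerivAt (fun x => ∑ P ∈ C, ∑ j ∈ Finset.range P.card, (p - x) ^ j)
      (∑ P ∈ C, ∑ j ∈ Finset.range P.card, ((j : ℝ) * (p - x) ^ (j - 1) * (-1))) x :=
    HasDerivAt.fun_sum fun P _ => HasDerivAt.fun_sum fun j _ =>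
      ((hasDerivAt_id x).const_sub p).pow j
  convert h using 1
  · rfl
  simp only [Tcx.S1, ← Finset.sum_neg_distrib]
  exact Finset.sum_congr rfl fun P _ => Finset.sum_congr rfl fun j _ => by ring

lemma Tcx.hasDeriv_S1 : HasDerivAt (fun x => Tcx.S1 C (p - x)) (-(Tcx.S2 C (p - x))) x := by
  have h : HasDerivAt (fun x => ∑ P ∈ C, ∑ j ∈ Finset.range P.card, (j : ℝ) * (p - x) ^ (j - 1))
      (∑ P ∈ C, ∑ j ∈ Finset.range P.card, (j : ℝ) * (((j - 1 : ℕ) : ℝ) * (p - x) ^ (j - 1 - 1) * (-1))) x :=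
    HasDerivAt.fun_sum fun P _ => HasDerivAt.fun_sum fun j _ =>
      (((hasDerivAt_id x).const_sub p).pow (j - 1)).const_mul (j : ℝ)
  convert h using 1
  · rfl
  simp only [Tcx.S2, ← Finset.sum_neg_distrib]
  exact Finset.sum_congr rfl fun P _ => Finset.sum_congr rfl fun j _ => by ring

lemma Tcx.hasDeriv_R : HasDerivAt (fun x => Tcx.R C m (p - x)) (-(Tcx.R1 C m (p - x))) x := by
  have h : HasDerivAt (fun x => ∑ t ∈ Finset.range (m - 1), Tcx.Rt C t * (p - x) ^ t)
      (∑ t ∈ Finset.range (m - 1), Tcx.Rt C t * ((t : ℝ) * (p - x) ^ (t - 1) * (-1))) x :=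
    HasDerivAt.fun_sum fun t _ =>
      (((hasDerivAt_id x).const_sub p).pow t).const_mul (Tcx.Rt C t)
  convert h using 1
  · rfl
  simp only [Tcx.R1, ← Finset.sum_neg_distrib]
  exact Finset.sum_congr rfl fun t _ => by ring

lemma Tcx.hasDeriv_R1 : HasDerivAt (fun x => Tcx.R1 C m (p - x)) (-(Tcx.R2 C m (p - x))) x := by
  have h : HasDerivAt (fun x => ∑ t ∈ Finset.range (m - 1), Tcx.Rt C t * ((t : ℝ) * (p - x) ^ (t - 1)))
      (∑ t ∈ Finset.range (m - 1), Tcx.Rt C t * ((t : ℝ) * (((t - 1 : ℕ) : ℝ) * (p - x) ^ (t - 1 - 1) * (-1)))) x :=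
    HasDerivAt.fun_sum fun t _ =>
      ((((hasDerivAt_id x).const_sub p).pow (t - 1)).const_mul (t : ℝ)).const_mul (Tcx.Rt C t)
  convert h using 1
  · rfl
  simp only [Tcx.R2, ← Finset.sum_neg_distrib]
  exact Finset.sum_congr rfl fun t _ => by ring

lemma Tcx.hasDeriv_G : HasDerivAt (fun x => Tcx.G C m x (p - x)) (Tcx.G1 C m p x) x := by
  have h1 : HasDerivAt (fun x : ℝ => (x - 1) ^ 2) (((2 : ℕ) : ℝ) * (x - 1) ^ (2 - 1) * 1) x :=
    ((hasDerivAt_id x).sub_const 1).pow 2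
  have hA : HasDerivAt (fun x => (x - 1) * Tcx.S C (p - x))
      (1 * Tcx.S C (p - x) + (x - 1) * (-(Tcx.S1 C (p - x)))) x :=
    ((hasDerivAt_id x).sub_const 1).mul (Tcx.hasDeriv_S C p x)
  have h := (h1.add hA).add (Tcx.hasDeriv_R C m p x)
  have hval : Tcx.G1 C m p x
      = ((2 : ℕ) : ℝ) * (x - 1) ^ (2 - 1) * 1 + (1 * Tcx.S C (p - x) + (x - 1) * (-(Tcx.S1 C (p - x))))
        + (-(Tcx.R1 C m (p - x))) := by
    simp only [Tcx.G1]; push_cast; ring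
  rw [hval]
  exact h

lemma Tcx.hasDeriv_G1 : HasDerivAt (fun x => Tcx.G1 C m p x) (Tcx.G2 C m p x) x := by
  have hd1 : HasDerivAt (fun x : ℝ => 2 * (x - 1)) (2 * 1) x :=
    ((hasDerivAt_id x).sub_const 1).const_mul 2
  have hd3 : HasDerivAt (fun x => (x - 1) * Tcx.S1 C (p - x))
      (1 * Tcx.S1 C (p - x) + (x - 1) * (-(Tcx.S2 C (p - x)))) x :=
    ((hasDerivAt_id x).sub_const 1).mul (Tcx.hasDeriv_S1 C p x)
  have h := ((hd1.add (Tcx.hasDeriv_S C p x)).sub hd3).sub (Tcx.hasDeriv_R1 C m p x)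
  have hval : Tcx.G2 C m p x
      = 2 * 1 + (-(Tcx.S1 C (p - x)))
        - (1 * Tcx.S1 C (p - x) + (x - 1) * (-(Tcx.S2 C (p - x))))
        - (-(Tcx.R2 C m (p - x))) := by
    simp only [Tcx.G2]; ring
  rw [hval]
  exact h

end DerivLemmas


open Finset

lemma Tcx.coeff_ineq_real [DecidableEq α] (C : Finset (Finset α)) (m t : ℕ)
    (hmsum : ∑ P ∈ C, P.card = m)
    (hsize : ∀ P ∈ C, P.card + 2 ≤ m)
    (hm : t + 4 ≤ m) :
    2*(∑ P ∈ C, if t+2 ≤ P.card then ((t:ℝ)+1) else 0)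
      + (∑ P ∈ C, if t+3 ≤ P.card then ((t:ℝ)+2)*((t:ℝ)+1) else 0)
      ≤ ((t:ℝ)+2)*((t:ℝ)+1)*Tcx.Rt C (t+2) + (if t = 0 then (2:ℝ) else 0) := by
  have hN := Tcx.coeff_ineq C m t hmsum hsize hm
  have c1 : 2*(∑ P ∈ C, if t+2 ≤ P.card then ((t:ℝ)+1) else 0)
      = ((∑ P ∈ C, if t+2 ≤ P.card then 2*(t+1) else 0 : ℕ) : ℝ) := by
    rw [Nat.cast_sum, Finset.mul_sum]
    refine Finset.sum_congr rfl fun P _ => ?_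
    split_ifs <;> push_cast <;> ring
  have c2 : (∑ P ∈ C, if t+3 ≤ P.card then ((t:ℝ)+2)*((t:ℝ)+1) else 0)
      = ((∑ P ∈ C, if t+3 ≤ P.card then (t+2)*(t+1) else 0 : ℕ) : ℝ) := by
    rw [Nat.cast_sum]
    refine Finset.sum_congr rfl fun P _ => ?_
    split_ifs <;> push_cast <;> ring
  have c4 : (if t = 0 then (2:ℝ) else 0) = ((if t = 0 then 2 else 0 : ℕ) : ℝ) := by
    split_ifs <;> simp
  have hRt : Tcx.Rt C (t+2) = ((∑ P ∈ C, min (t+3) P.card : ℕ) : ℝ) - ((t:ℝ)+3) := by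
    simp only [Tcx.Rt]
    push_cast
    ring
  have hcast := (Nat.cast_le (α := ℝ)).2 hN
  push_cast [-Nat.cast_sum] at hcast
  rw [c1, c2, c4, hRt]
  push_cast [-Nat.cast_sum]
  nlinarith [hcast]


open Finset


noncomputable def Tcx.tsum (E' : Finset α) (r : Finset α → ℕ) (x y : ℝ) : ℝ :=
  ∑ A ∈ E'.powerset, (x - 1) ^ (2 - r A) * (y - 1) ^ (A.card - r A)

theorem Tcx.abstract_convex (E' : Finset α) (C : Finset (Finset α))
    (r : Finset α → ℕ)
    (hsub : ∀ P ∈ C, P ⊆ E')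
    (huniq : ∀ e : α, ∀ P ∈ C, ∀ Q ∈ C, e ∈ P → e ∈ Q → P = Q)
    (hcover : ∀ e ∈ E', ∃ P ∈ C, e ∈ P)
    (hk : 2 ≤ C.card)
    (hsize : ∀ P ∈ C, P.card + 2 ≤ E'.card)
    (hne : ∀ P ∈ C, P.Nonempty)
    (hr0 : r ∅ = 0)
    (hr1 : ∀ A, A ⊆ E' → A.Nonempty → (∃ P ∈ C, A ⊆ P) → r A = 1)
    (hr2 : ∀ A, A ⊆ E' → (¬ ∃ P ∈ C, A ⊆ P) → r A = 2)
    (p : ℝ) :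
    ConvexOn ℝ (Set.Icc 0 p) (fun x => Tcx.tsum E' r x (p - x)) := by
  classical
  set m := E'.card with hm_def
  obtain ⟨P₀, hP₀⟩ : C.Nonempty := Finset.card_pos.1 (by omega)
  have hm3 : 3 ≤ m := by
    have h1 := Finset.card_pos.2 (hne P₀ hP₀)
    have h2 := hsize P₀ hP₀
    omega
  have hmsum : ∑ P ∈ C, P.card = m := by
    have hdisj : ∀ P ∈ C, ∀ Q ∈ C, P ≠ Q → Disjoint P Q := by
      intro P hP Q hQ hPQ
      rw [Finset.disjoint_left]
      intro a haP haQ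
      exact hPQ (huniq a P hP Q hQ haP haQ)
    have hE : E' = C.biUnion (fun P => P) := by
      ext e
      simp only [Finset.mem_biUnion]
      constructor
      · exact hcover e
      · rintro ⟨P, hP, heP⟩; exact hsub P hP heP
    rw [hm_def, hE, Finset.card_biUnion hdisj]
  have hdisjP : (↑C : Set (Finset α)).PairwiseDisjoint
      (fun P : Finset α => P.powerset.erase ∅) := by
    intro P hP Q hQ hPQ
    simp only [Function.onFun]
    rw [Finset.disjoint_left]
    intro A hA hA'
    obtain ⟨hAne, hApow⟩ := Finset.mem_erase.1 hA
    obtain ⟨-, hApow'⟩ := Finset.mem_erase.1 hA'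
    obtain ⟨e, he⟩ := Finset.nonempty_of_ne_empty hAne
    exact hPQ (huniq e P hP Q hQ (Finset.mem_powerset.1 hApow he)
      (Finset.mem_powerset.1 hApow' he))
  -- the splitting of the powerset sum
  have hsplit : ∀ g : Finset α → ℝ, ∑ A ∈ E'.powerset, g A
      = g ∅ + ((∑ P ∈ C, ∑ A ∈ P.powerset.erase ∅, g A)
        + ∑ A ∈ E'.powerset.filter (fun A => ¬ ∃ P ∈ C, A ⊆ P), g A) := by
    intro g
    have hmem0 : ∅ ∈ E'.powerset.filter (fun A => ∃ P ∈ C, A ⊆ P) :=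
      Finset.mem_filter.2 ⟨Finset.mem_powerset.2 (Finset.empty_subset _),
        ⟨P₀, hP₀, Finset.empty_subset _⟩⟩
    have herase : (E'.powerset.filter (fun A => ∃ P ∈ C, A ⊆ P)).erase ∅
        = C.biUnion (fun P => P.powerset.erase ∅) := by
      ext A
      simp only [Finset.mem_erase, Finset.mem_filter, Finset.mem_powerset, Finset.mem_biUnion]
      constructor
      · rintro ⟨hAne, hAE, P, hP, hAP⟩
        exact ⟨P, hP, hAne, hAP⟩
      · rintro ⟨P, hP, h1, h2⟩
        exact ⟨h1, h2.trans (hsub P hP), P, hP, h2⟩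
    calc ∑ A ∈ E'.powerset, g A
        = (∑ A ∈ E'.powerset.filter (fun A => ∃ P ∈ C, A ⊆ P), g A)
          + ∑ A ∈ E'.powerset.filter (fun A => ¬ ∃ P ∈ C, A ⊆ P), g A :=
          (Finset.sum_filter_add_sum_filter_not _ _ g).symm
      _ = ((∑ A ∈ (E'.powerset.filter (fun A => ∃ P ∈ C, A ⊆ P)).erase ∅, g A) + g ∅)
          + ∑ A ∈ E'.powerset.filter (fun A => ¬ ∃ P ∈ C, A ⊆ P), g A := by
          rw [Finset.sum_erase_add _ g hmem0]
      _ = g ∅ + ((∑ P ∈ C, ∑ A ∈ P.powerset.erase ∅, g A)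
          + ∑ A ∈ E'.powerset.filter (fun A => ¬ ∃ P ∈ C, A ⊆ P), g A) := by
          rw [herase, Finset.sum_biUnion hdisjP]; ring
  -- per-class binomial sums
  have hclass : ∀ y : ℝ, ∀ P ∈ C, ∑ A ∈ P.powerset.erase ∅, (y-1)^A.card = y^P.card - 1 := by
    intro y P _
    have h1 : (∑ A ∈ P.powerset.erase ∅, (y-1)^A.card) + (y-1)^(∅ : Finset α).card
        = ∑ A ∈ P.powerset, (y-1)^A.card :=
      Finset.sum_erase_add _ _ (Finset.mem_powerset.2 (Finset.empty_subset _))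
    have h2 := Tcx.powerset_pow P (y-1)
    rw [show y-1+1 = y from by ring] at h2
    simp only [Finset.card_empty, pow_zero] at h1
    linarith [h1, h2]
  have hsum_pow : ∀ y : ℝ, ∑ A ∈ E'.powerset, (y-1)^A.card = y^m := by
    intro y
    have h2 := Tcx.powerset_pow E' (y-1)
    rw [show y-1+1 = y from by ring] at h2
    exact h2
  -- the main closed-form identity, multiplied by (y-1)^2
  have key1 : ∀ x y : ℝ, (y-1)^2 * Tcx.tsum E' r x y
      = (x-1)^2*(y-1)^2 + ((x-1)*(y-1))*(∑ P ∈ C, (y^P.card - 1))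
        + ((y^m - 1) - ∑ P ∈ C, (y^P.card - 1)) := by
    intro x y
    have h := hsplit (fun A => (y-1)^2 * ((x - 1) ^ (2 - r A) * (y - 1) ^ (A.card - r A)))
    beta_reduce at h
    have p0 : (y-1)^2 * ((x-1)^(2 - r ∅) * (y-1)^((∅ : Finset α).card - r ∅))
        = (x-1)^2*(y-1)^2 := by
      simp only [hr0, Finset.card_empty, Nat.sub_zero, pow_zero, mul_one]
      ring
    have p1 : ∀ P ∈ C, ∑ A ∈ P.powerset.erase ∅,
        (y-1)^2 * ((x-1)^(2 - r A)*(y-1)^(A.card - r A)) = (x-1)*(y-1)*(y^P.card - 1) := by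
      intro P hP
      have hterm : ∀ A ∈ P.powerset.erase ∅,
          (y-1)^2 * ((x-1)^(2 - r A)*(y-1)^(A.card - r A))
            = (x-1)*(y-1)*(y-1)^A.card := by
        intro A hA
        obtain ⟨hAne, hApow⟩ := Finset.mem_erase.1 hA
        have hAP := Finset.mem_powerset.1 hApow
        have hrA : r A = 1 := hr1 A (hAP.trans (hsub P hP))
          (Finset.nonempty_of_ne_empty hAne) ⟨P, hP, hAP⟩
        have hc : 1 ≤ A.card := Finset.card_pos.2 (Finset.nonempty_of_ne_empty hAne)
        rw [hrA, pow_one]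
        have e : 2 + (A.card - 1) = A.card + 1 := by omega
        have hpow : (y-1)^2 * (y-1)^(A.card-1) = (y-1)*(y-1)^A.card := by
          rw [← pow_add, e, pow_succ]; ring
        calc (y-1)^2 * ((x-1) * (y-1)^(A.card - 1))
            = (x-1) * ((y-1)^2 * (y-1)^(A.card-1)) := by ring
          _ = (x-1) * ((y-1)*(y-1)^A.card) := by rw [hpow]
          _ = (x-1)*(y-1)*(y-1)^A.card := by ring
      rw [Finset.sum_congr rfl hterm, ← Finset.mul_sum, hclass y P hP]
    have p2 : ∑ A ∈ E'.powerset.filter (fun A => ¬ ∃ P ∈ C, A ⊆ P),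
        (y-1)^2 * ((x-1)^(2 - r A)*(y-1)^(A.card - r A))
          = (y^m - 1) - ∑ P ∈ C, (y^P.card - 1) := by
      have hterm : ∀ A ∈ E'.powerset.filter (fun A => ¬ ∃ P ∈ C, A ⊆ P),
          (y-1)^2 * ((x-1)^(2 - r A)*(y-1)^(A.card - r A)) = (y-1)^A.card := by
        intro A hA
        obtain ⟨hApow, hnq⟩ := Finset.mem_filter.1 hA
        have hAE := Finset.mem_powerset.1 hApow
        have hrA : r A = 2 := hr2 A hAE hnq
        have hc : 2 ≤ A.card := by
          by_contra hcon
          have : A.card = 0 ∨ A.card = 1 := by omega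
          rcases this with h01|h01
          · exact hnq ⟨P₀, hP₀, by
              rw [Finset.card_eq_zero.1 h01]
              exact Finset.empty_subset _⟩
          · obtain ⟨e, he⟩ := Finset.card_eq_one.1 h01
            obtain ⟨P, hP, heP⟩ := hcover e (hAE (he ▸ Finset.mem_singleton_self e))
            exact hnq ⟨P, hP, by rw [he]; exact Finset.singleton_subset_iff.2 heP⟩
        rw [hrA]
        have e : 2 + (A.card - 2) = A.card := by omega
        calc (y-1)^2 * ((x-1)^(2-2) * (y-1)^(A.card-2))
            = (y-1)^(2+(A.card-2)) := by norm_num [← pow_add]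
          _ = (y-1)^A.card := by rw [e]
      rw [Finset.sum_congr rfl hterm]
      have h2 := hsplit (fun A => (y-1)^A.card)
      beta_reduce at h2
      rw [hsum_pow y] at h2
      simp only [Finset.card_empty, pow_zero] at h2
      rw [Finset.sum_congr rfl (hclass y)] at h2
      linarith [h2]
    rw [Tcx.tsum, Finset.mul_sum, h, p0, Finset.sum_congr rfl p1, ← Finset.mul_sum, p2]
    ring
  -- identities for S and R against the geometric sums
  have hSW : ∀ y : ℝ, (Tcx.S C y) * (y-1) = ∑ P ∈ C, (y^P.card - 1) := by
    intro y
    simp only [Tcx.S]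
    rw [Finset.sum_mul]
    exact Finset.sum_congr rfl fun P _ => geom_sum_mul y P.card
  have hRW : ∀ y : ℝ, (Tcx.R C m y) * (y-1) = (∑ j ∈ Finset.range m, y^j) - Tcx.S C y := by
    intro y
    simp only [Tcx.R]
    rw [Finset.sum_mul]
    have hterm : ∀ t ∈ Finset.range (m-1), (Tcx.Rt C t * y^t) * (y-1)
        = (∑ P ∈ C, (((min (t+1) P.card : ℕ) : ℝ) * y^t) * (y-1)) - (((t:ℝ)+1) * y^t) * (y-1) := by
      intro t _
      simp only [Tcx.Rt]
      rw [← Finset.sum_mul, ← Finset.sum_mul, Nat.cast_sum]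
      ring
    rw [Finset.sum_congr rfl hterm, Finset.sum_sub_distrib]
    have h1 : ∑ t ∈ Finset.range (m-1), ∑ P ∈ C, (((min (t+1) P.card : ℕ) : ℝ) * y^t) * (y-1)
        = ∑ P ∈ C, ((P.card : ℝ) * y^(m-1) - ∑ j ∈ Finset.range P.card, y^j) := by
      rw [Finset.sum_comm]
      refine Finset.sum_congr rfl fun P hP => ?_
      rw [← Finset.sum_mul]
      exact Tcx.sumB y P.card (m-1) (by have := hsize P hP; omega)
    have h2 : ∑ t ∈ Finset.range (m-1), (((t:ℝ)+1) * y^t) * (y-1)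
        = ((m-1 : ℕ):ℝ) * y^(m-1) - ∑ j ∈ Finset.range (m-1), y^j := by
      rw [← Finset.sum_mul]
      exact Tcx.sumA y (m-1)
    rw [h1, h2, Finset.sum_sub_distrib, ← Finset.sum_mul]
    have hcast : (∑ P ∈ C, ((P.card : ℕ) : ℝ)) = (m:ℝ) := by rw [← Nat.cast_sum, hmsum]
    rw [hcast]
    have hm1 : m - 1 + 1 = m := by omega
    have hsm : ∑ j ∈ Finset.range m, y^j = (∑ j ∈ Finset.range (m-1), y^j) + y^(m-1) := by
      have h := Finset.sum_range_succ (fun j => y^j) (m-1)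
      rw [hm1] at h
      exact h
    have hmcast : ((m-1:ℕ):ℝ) = (m:ℝ) - 1 := by
      rw [Nat.cast_sub (by omega : 1 ≤ m)]; norm_num
    rw [hsm, hmcast]
    simp only [Tcx.S]
    ring
  have keyG : ∀ x y : ℝ, (y-1)^2 * Tcx.G C m x y
      = (x-1)^2*(y-1)^2 + ((x-1)*(y-1))*(∑ P ∈ C, (y^P.card - 1))
        + ((y^m - 1) - ∑ P ∈ C, (y^P.card - 1)) := by
    intro x y
    have e1 := hSW y
    have e2 := hRW y
    have gm := geom_sum_mul y m
    simp only [Tcx.G]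
    linear_combination ((x-1)*(y-1) - 1) * e1 + (y-1) * e2 + gm
  have hFG : ∀ x y : ℝ, Tcx.tsum E' r x y = Tcx.G C m x y := by
    intro x y
    have cont1 : Continuous (fun y => Tcx.tsum E' r x y) := by
      unfold Tcx.tsum
      exact continuous_finset_sum _ fun A _ =>
        continuous_const.mul ((continuous_id.sub continuous_const).pow _)
    have cont2 : Continuous (fun y => Tcx.G C m x y) := by
      unfold Tcx.G Tcx.S Tcx.R
      refine (continuous_const.add (continuous_const.mul ?_)).add ?_
      · exact continuous_finset_sum _ fun P _ =>
          continuous_finset_sum _ fun j _ => continuous_pow j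
      · exact continuous_finset_sum _ fun t _ => continuous_const.mul (continuous_pow t)
    have heq : (fun y => Tcx.tsum E' r x y) = (fun y => Tcx.G C m x y) := by
      refine Continuous.ext_on (dense_compl_singleton (1:ℝ)) cont1 cont2 ?_
      intro y hy
      have hne1 : (y - 1) ≠ 0 := sub_ne_zero.2 (Set.mem_compl_singleton_iff.1 hy)
      exact mul_left_cancel₀ (pow_ne_zero 2 hne1) ((key1 x y).trans (keyG x y).symm)
    exact congrFun heq y
  -- coefficient expansions of S1, S2, R2
  have hS1e : ∀ y : ℝ, Tcx.S1 C y
      = ∑ t ∈ Finset.range (m-3), (∑ P ∈ C, if t+2 ≤ P.card then ((t:ℝ)+1) else 0) * y^t := by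
    intro y
    simp only [Tcx.S1]
    have hP : ∀ P ∈ C, ∑ j ∈ Finset.range P.card, (j:ℝ)*y^(j-1)
        = ∑ t ∈ Finset.range (m-3), (if t+2 ≤ P.card then ((t:ℝ)+1) else 0) * y^t := by
      intro P hPC
      rw [Tcx.sumC1]
      refine Tcx.sum_pad y (show P.card - 1 ≤ m - 3 by have := hsize P hPC; omega) _ _ ?_ ?_
      · intro t ht; exact (if_pos (by omega : t+2 ≤ P.card)).symm
      · intro t ht; exact if_neg (by omega : ¬ (t+2 ≤ P.card))
    rw [Finset.sum_congr rfl hP, Finset.sum_comm]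
    exact Finset.sum_congr rfl fun t _ => (Finset.sum_mul _ _ _).symm
  have hS2e : ∀ y : ℝ, Tcx.S2 C y
      = ∑ t ∈ Finset.range (m-3),
          (∑ P ∈ C, if t+3 ≤ P.card then ((t:ℝ)+2)*((t:ℝ)+1) else 0) * y^t := by
    intro y
    simp only [Tcx.S2]
    have hP : ∀ P ∈ C, ∑ j ∈ Finset.range P.card, (j:ℝ)*((j-1:ℕ):ℝ)*y^(j-1-1)
        = ∑ t ∈ Finset.range (m-3), (if t+3 ≤ P.card then ((t:ℝ)+2)*((t:ℝ)+1) else 0) * y^t := by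
      intro P hPC
      rw [Tcx.sumC2]
      refine Tcx.sum_pad y (show P.card - 2 ≤ m - 3 by have := hsize P hPC; omega) _ _ ?_ ?_
      · intro t ht; exact (if_pos (by omega : t+3 ≤ P.card)).symm
      · intro t ht; exact if_neg (by omega : ¬ (t+3 ≤ P.card))
    rw [Finset.sum_congr rfl hP, Finset.sum_comm]
    exact Finset.sum_congr rfl fun t _ => (Finset.sum_mul _ _ _).symm
  have hR2e : ∀ y : ℝ, Tcx.R2 C m y
      = ∑ t ∈ Finset.range (m-3), (((t:ℝ)+2)*((t:ℝ)+1)*Tcx.Rt C (t+2)) * y^t := by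
    intro y
    simp only [Tcx.R2]
    have hm1 : m - 1 = (m - 3) + 1 + 1 := by omega
    rw [hm1, Finset.sum_range_succ', Finset.sum_range_succ']
    simp only [Nat.cast_zero, zero_mul, mul_zero, add_zero, Nat.sub_self, Nat.add_sub_cancel]
    refine Finset.sum_congr rfl fun t _ => ?_
    have e : t+1+1 = t+2 := rfl
    rw [e]
    push_cast
    ring
  -- the key coefficientwise inequality
  have hmain : ∀ y : ℝ, 0 ≤ y → 2*Tcx.S1 C y + Tcx.S2 C y ≤ 2 + Tcx.R2 C m y := by
    intro y hy
    rw [hS1e y, hS2e y, hR2e y, Finset.mul_sum, ← Finset.sum_add_distrib]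
    have hstep : ∀ t ∈ Finset.range (m-3),
        2*((∑ P ∈ C, if t+2 ≤ P.card then ((t:ℝ)+1) else 0) * y^t)
          + (∑ P ∈ C, if t+3 ≤ P.card then ((t:ℝ)+2)*((t:ℝ)+1) else 0) * y^t
        ≤ (((t:ℝ)+2)*((t:ℝ)+1)*Tcx.Rt C (t+2)) * y^t + (if t = 0 then (2:ℝ) else 0) := by
      intro t ht
      have htm : t + 4 ≤ m := by have := Finset.mem_range.1 ht; omega
      have hco := Tcx.coeff_ineq_real C m t hmsum hsize htm
      rcases eq_or_ne t 0 with rfl|ht0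
      · simp only [pow_zero, mul_one, if_pos rfl] at hco ⊢
        linarith [hco]
      · rw [if_neg ht0] at hco ⊢
        have h8 : (0:ℝ) ≤ y^t := pow_nonneg hy t
        have h9 := mul_le_mul_of_nonneg_right
          (by linarith [hco] :
            2*(∑ P ∈ C, if t+2 ≤ P.card then ((t:ℝ)+1) else 0)
              + (∑ P ∈ C, if t+3 ≤ P.card then ((t:ℝ)+2)*((t:ℝ)+1) else 0)
            ≤ ((t:ℝ)+2)*((t:ℝ)+1)*Tcx.Rt C (t+2)) h8
        nlinarith [h9]
    calc ∑ t ∈ Finset.range (m-3),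
          (2*((∑ P ∈ C, if t+2 ≤ P.card then ((t:ℝ)+1) else 0) * y^t)
            + (∑ P ∈ C, if t+3 ≤ P.card then ((t:ℝ)+2)*((t:ℝ)+1) else 0) * y^t)
        ≤ ∑ t ∈ Finset.range (m-3),
            ((((t:ℝ)+2)*((t:ℝ)+1)*Tcx.Rt C (t+2)) * y^t + (if t = 0 then (2:ℝ) else 0)) :=
          Finset.sum_le_sum hstep
      _ = (∑ t ∈ Finset.range (m-3), (((t:ℝ)+2)*((t:ℝ)+1)*Tcx.Rt C (t+2)) * y^t)
            + ∑ t ∈ Finset.range (m-3), (if t = 0 then (2:ℝ) else 0) := Finset.sum_add_distrib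
      _ ≤ (∑ t ∈ Finset.range (m-3), (((t:ℝ)+2)*((t:ℝ)+1)*Tcx.Rt C (t+2)) * y^t) + 2 := by
          have hb : ∑ t ∈ Finset.range (m-3), (if t = 0 then (2:ℝ) else 0) ≤ 2 := by
            rw [Finset.sum_ite_eq' (Finset.range (m-3)) 0 (fun _ => (2:ℝ))]
            split_ifs <;> norm_num
          linarith
      _ = 2 + ∑ t ∈ Finset.range (m-3), (((t:ℝ)+2)*((t:ℝ)+1)*Tcx.Rt C (t+2)) * y^t := by ring
  -- second derivative is nonnegative on the interior
  have hG2nonneg : ∀ x ∈ interior (Set.Icc (0:ℝ) p), 0 ≤ Tcx.G2 C m p x := by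
    intro x hx
    rw [interior_Icc] at hx
    have hx0 : 0 < x := hx.1
    have hy0 : (0:ℝ) ≤ p - x := by linarith [hx.2]
    have hS2nn : 0 ≤ Tcx.S2 C (p-x) := by
      simp only [Tcx.S2]
      refine Finset.sum_nonneg fun P _ => Finset.sum_nonneg fun j _ => ?_
      exact mul_nonneg (mul_nonneg (Nat.cast_nonneg j) (Nat.cast_nonneg _)) (pow_nonneg hy0 _)
    have hmm := hmain (p-x) hy0
    have hxS2 : 0 ≤ x * Tcx.S2 C (p-x) := mul_nonneg hx0.le hS2nn
    simp only [Tcx.G2]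
    nlinarith [hmm, hxS2, hS2nn]
  have hconv : ConvexOn ℝ (Set.Icc 0 p) (fun x => Tcx.G C m x (p-x)) :=
    convexOn_of_hasDerivWithinAt2_nonneg (convex_Icc 0 p)
      (fun x _ => (Tcx.hasDeriv_G C m p x).continuousAt.continuousWithinAt)
      (fun x _ => (Tcx.hasDeriv_G C m p x).hasDerivWithinAt)
      (fun x _ => (Tcx.hasDeriv_G1 C m p x).hasDerivWithinAt)
      hG2nonneg
  have hfun : (fun x => Tcx.tsum E' r x (p - x)) = (fun x => Tcx.G C m x (p-x)) :=
    funext fun x => hFG x (p-x)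
  rw [hfun]
  exact hconv

section RankSetLemmas

open Matroid Set

variable [Fintype α]

lemma Tcx.rset_nonempty (M : Matroid α) (X : Set α) :
    {n | ∃ I ⊆ X, M.Indep I ∧ I.ncard = n}.Nonempty :=
  ⟨0, ∅, Set.empty_subset X, M.empty_indep, by simp⟩

lemma Tcx.rset_bdd (M : Matroid α) (X : Set α) :
    BddAbove {n | ∃ I ⊆ X, M.Indep I ∧ I.ncard = n} := by
  refine ⟨Fintype.card α, ?_⟩
  rintro n ⟨I, hIX, hI, rfl⟩
  have h := Set.ncard_le_ncard (Set.subset_univ I) Set.finite_univ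
  simpa [Set.ncard_univ, Nat.card_eq_fintype_card] using h

lemma Tcx.le_rankSet {M : Matroid α} {I X : Set α} (hI : M.Indep I) (hIX : I ⊆ X) :
    I.ncard ≤ M.rankSet X :=
  le_csSup (Tcx.rset_bdd M X) ⟨I, hIX, hI, rfl⟩

lemma Tcx.rankSet_le {M : Matroid α} {X : Set α} {n : ℕ}
    (h : ∀ I, I ⊆ X → M.Indep I → I.ncard ≤ n) : M.rankSet X ≤ n :=
  csSup_le (Tcx.rset_nonempty M X) (by rintro k ⟨I, h1, h2, rfl⟩; exact h I h1 h2)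

lemma Tcx.exists_rankSet (M : Matroid α) (X : Set α) :
    ∃ I ⊆ X, M.Indep I ∧ I.ncard = M.rankSet X :=
  Nat.sSup_mem (Tcx.rset_nonempty M X) (Tcx.rset_bdd M X)

lemma Tcx.rankSet_mono {M : Matroid α} {X Y : Set α} (h : X ⊆ Y) :
    M.rankSet X ≤ M.rankSet Y :=
  Tcx.rankSet_le (fun I h1 h2 => Tcx.le_rankSet h2 (h1.trans h))

end RankSetLemmas


end TcxAux

/-- If `M` is a rank-2 matroid on a finite ground set with no loops and no coloops,
then `T_M` is convex along the portions of the lines `x + y = p` lying in the positive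
quadrant. -/
theorem tutteConvexOnLines_of_rank_two [Fintype α] (M : Matroid α)
    (hrk : M.rankSet M.E = 2)
    (hloop : ∀ e ∈ M.E, M.rankSet {e} ≠ 0)
    (hcoloop : ∀ e ∈ M.E, ¬ (∀ B, M.IsBase B → e ∈ B)) :
    M.TutteConvexOnLines := by
  classical
  intro t x₁ y₁ x₂ y₂ ht0 ht1 hx₁ hy₁ hx₂ hy₂ hp
  set E' : Finset α := M.E.toFinite.toFinset with hE'_def
  have hmemE : ∀ e, e ∈ E' ↔ e ∈ M.E := fun e => M.E.toFinite.mem_toFinset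
  -- no loops : singletons are independent
  have hnl : ∀ e ∈ M.E, M.Indep {e} := by
    intro e he
    obtain ⟨I, hIX, hI, hcard⟩ := Tcx.exists_rankSet M {e}
    have hIne : I.Nonempty := by
      rw [Set.nonempty_iff_ne_empty]
      intro h0
      rw [h0] at hcard
      simp only [Set.ncard_empty] at hcard
      exact hloop e he hcard.symm
    rcases Set.subset_singleton_iff_eq.1 hIX with h|h
    · exact absurd h (Set.nonempty_iff_ne_empty.1 hIne)
    · rwa [h] at hI
  -- similarity relation (parallel or equal)
  set sim : α → α → Prop := fun e f => e = f ∨ ¬ M.Indep {e, f} with hsim_def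
  have hsymm : ∀ e f, sim e f → sim f e := by
    intro e f h
    rcases h with rfl|h
    · exact Or.inl rfl
    · exact Or.inr (by rwa [Set.pair_comm])
  have htrans : ∀ e f g, e ∈ M.E → f ∈ M.E → g ∈ M.E → sim e f → sim f g → sim e g := by
    intro e f g he hf hg hef hfg
    rcases hef with rfl|hef
    · exact hfg
    rcases hfg with rfl|hfg
    · exact Or.inr hef
    rcases eq_or_ne e g with rfl|heg
    · exact Or.inl rfl
    refine Or.inr fun hind => ?_
    have hf1 : M.Indep {f} := hnl f hf
    have hlt : ({f} : Set α).encard < ({e, g} : Set α).encard := by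
      rw [Set.encard_singleton, Set.encard_pair heg]
      exact_mod_cast Nat.one_lt_two
    obtain ⟨x, hx, hxi⟩ := hf1.augment hind hlt
    rcases Set.mem_insert_iff.1 hx.1 with rfl|hxg
    · exact hef hxi
    · rw [Set.mem_singleton_iff.1 hxg] at hxi
      rw [Set.pair_comm g f] at hxi
      exact hfg hxi
  -- independent sets inside a similarity class have all elements equal
  have hpair_eq : ∀ I : Set α, M.Indep I → (∀ a ∈ I, ∀ b ∈ I, sim a b) →
      ∀ a ∈ I, ∀ b ∈ I, a = b := by
    intro I hI hsim2 a ha b hb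
    by_contra hab
    rcases hsim2 a ha b hb with h|h
    · exact hab h
    · exact h (hI.subset (Set.insert_subset ha (Set.singleton_subset_iff.2 hb)))
  have hpair_le : ∀ I : Set α, M.Indep I → (∀ a ∈ I, ∀ b ∈ I, sim a b) → I.ncard ≤ 1 := by
    intro I hI hsim2
    by_contra hcon
    push_neg at hcon
    obtain ⟨a, b, ha, hb, hab⟩ := (Set.one_lt_ncard_iff (Set.toFinite I)).1 hcon
    exact hab (hpair_eq I hI hsim2 a ha b hb)
  -- classes
  set cls : α → Finset α := fun e => E'.filter (fun f => sim e f) with hcls_def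
  have hmem_cls : ∀ e f, f ∈ cls e ↔ f ∈ E' ∧ sim e f := fun e f => Finset.mem_filter
  have hcls_eq : ∀ e ∈ E', ∀ f ∈ E', sim e f → cls e = cls f := by
    intro e he f hf hef
    ext g
    rw [hmem_cls, hmem_cls]
    constructor
    · rintro ⟨hg, hsg⟩
      exact ⟨hg, htrans f e g ((hmemE f).1 hf) ((hmemE e).1 he) ((hmemE g).1 hg)
        (hsymm e f hef) hsg⟩
    · rintro ⟨hg, hsg⟩
      exact ⟨hg, htrans e f g ((hmemE e).1 he) ((hmemE f).1 hf) ((hmemE g).1 hg) hef hsg⟩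
  set C : Finset (Finset α) := E'.image cls with hC_def
  have hself : ∀ e ∈ E', e ∈ cls e := fun e he => (hmem_cls e e).2 ⟨he, Or.inl rfl⟩
  have hsub : ∀ P ∈ C, P ⊆ E' := by
    intro P hP
    obtain ⟨a, ha, rfl⟩ := Finset.mem_image.1 hP
    exact Finset.filter_subset _ _
  have huniq : ∀ e : α, ∀ P ∈ C, ∀ Q ∈ C, e ∈ P → e ∈ Q → P = Q := by
    intro e P hP Q hQ heP heQ
    obtain ⟨a, ha, rfl⟩ := Finset.mem_image.1 hP
    obtain ⟨b, hb, rfl⟩ := Finset.mem_image.1 hQ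
    have h1 := (hmem_cls a e).1 heP
    have h2 := (hmem_cls b e).1 heQ
    rw [hcls_eq a ha e h1.1 h1.2, hcls_eq b hb e h2.1 h2.2]
  have hcover : ∀ e ∈ E', ∃ P ∈ C, e ∈ P := fun e he =>
    ⟨cls e, Finset.mem_image_of_mem cls he, hself e he⟩
  have hne : ∀ P ∈ C, P.Nonempty := by
    intro P hP
    obtain ⟨a, ha, rfl⟩ := Finset.mem_image.1 hP
    exact ⟨a, hself a ha⟩
  -- a rank-two independent pair
  obtain ⟨J, hJX, hJ, hJcard⟩ := Tcx.exists_rankSet M M.E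
  rw [hrk] at hJcard
  obtain ⟨u, v, huv, rfl⟩ := Set.ncard_eq_two.1 hJcard
  have hu : u ∈ M.E := hJX (by simp)
  have hv : v ∈ M.E := hJX (by simp)
  have hnsim : ¬ sim u v := by
    rintro (h|h)
    · exact huv h
    · exact h hJ
  have hk : 2 ≤ C.card := by
    refine Finset.one_lt_card_iff.2 ⟨cls u, cls v,
      Finset.mem_image_of_mem cls ((hmemE u).2 hu),
      Finset.mem_image_of_mem cls ((hmemE v).2 hv), ?_⟩
    intro hcuv
    have hvm : v ∈ cls u := hcuv ▸ hself v ((hmemE v).2 hv)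
    exact hnsim ((hmem_cls u v).1 hvm).2
  -- rank values
  set r : Finset α → ℕ := fun A => M.rankSet ↑A with hr_def
  have hr0 : r ∅ = 0 := by
    refine Nat.le_zero.1 (Tcx.rankSet_le fun I h1 h2 => ?_)
    simp only [Finset.coe_empty, Set.subset_empty_iff] at h1
    simp [h1]
  have hr1 : ∀ A, A ⊆ E' → A.Nonempty → (∃ P ∈ C, A ⊆ P) → r A = 1 := by
    rintro A hAE hAne ⟨P, hP, hAP⟩
    obtain ⟨a, ha, rfl⟩ := Finset.mem_image.1 hP
    obtain ⟨e, he⟩ := hAne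
    have heE : e ∈ M.E := (hmemE e).1 (hAE he)
    refine le_antisymm (Tcx.rankSet_le fun I h1 h2 => hpair_le I h2 ?_) ?_
    · intro b hb c hc
      have hbA : b ∈ (A : Set α) := h1 hb
      have hcA : c ∈ (A : Set α) := h1 hc
      have hbP := hAP (by exact_mod_cast hbA)
      have hcP := hAP (by exact_mod_cast hcA)
      have hsb := (hmem_cls a b).1 hbP
      have hsc := (hmem_cls a c).1 hcP
      exact htrans b a c ((hmemE b).1 hsb.1) ((hmemE a).1 ha) ((hmemE c).1 hsc.1)
        (hsymm a b hsb.2) hsc.2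
    · have h3 := Tcx.le_rankSet (hnl e heE)
        (Set.singleton_subset_iff.2 (show e ∈ (A : Set α) by exact_mod_cast he))
      simpa using h3
  have hr2 : ∀ A, A ⊆ E' → (¬ ∃ P ∈ C, A ⊆ P) → r A = 2 := by
    intro A hAE hnq
    have hAne : A.Nonempty := by
      rcases Finset.eq_empty_or_nonempty A with rfl|h
      · exact absurd ⟨cls u, Finset.mem_image_of_mem cls ((hmemE u).2 hu),
          Finset.empty_subset _⟩ hnq
      · exact h
    obtain ⟨e, he⟩ := hAne
    have heE' : e ∈ E' := hAE he
    have hnsub : ¬ A ⊆ cls e := fun hsubA =>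
      hnq ⟨cls e, Finset.mem_image_of_mem cls heE', hsubA⟩
    obtain ⟨f, hfA, hfn⟩ := Finset.not_subset.1 hnsub
    have hfE' : f ∈ E' := hAE hfA
    have hnsim2 : ¬ sim e f := fun hs => hfn ((hmem_cls e f).2 ⟨hfE', hs⟩)
    have hef : e ≠ f := fun h => hnsim2 (Or.inl h)
    have hind : M.Indep {e, f} := not_not.1 fun h => hnsim2 (Or.inr h)
    refine le_antisymm ?_ ?_
    · rw [← hrk]
      refine Tcx.rankSet_mono ?_
      rw [← M.E.toFinite.coe_toFinset]
      exact_mod_cast Finset.coe_subset.2 hAE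
    · have hsub2 : ({e, f} : Set α) ⊆ (A : Set α) :=
        Set.insert_subset (by exact_mod_cast he)
          (Set.singleton_subset_iff.2 (by exact_mod_cast hfA))
      have h2 := Tcx.le_rankSet hind hsub2
      rwa [Set.ncard_pair hef] at h2
  -- size bound from no coloops
  have hsize : ∀ P ∈ C, P.card + 2 ≤ E'.card := by
    intro P hP
    by_contra hcon
    push_neg at hcon
    obtain ⟨a, haE, rfl⟩ := Finset.mem_image.1 hP
    obtain ⟨Q, hQ, hQne⟩ := Finset.exists_mem_ne (by omega : 1 < C.card) (cls a)
    obtain ⟨w, hw⟩ := hne Q hQ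
    have hwE' : w ∈ E' := hsub Q hQ hw
    have hwn : w ∉ cls a := fun hwc =>
      hQne (huniq w Q hQ (cls a) (Finset.mem_image_of_mem cls haE) hw hwc)
    have hssub : cls a ⊂ E' :=
      ⟨hsub _ (Finset.mem_image_of_mem cls haE), fun hsub2 => hwn (hsub2 hwE')⟩
    have hlt : (cls a).card < E'.card := Finset.card_lt_card hssub
    have hcard1 : (E' \ cls a).card = 1 := by
      rw [Finset.card_sdiff_of_subset (hsub _ (Finset.mem_image_of_mem cls haE))]
      omega
    obtain ⟨w₀, hw₀⟩ := Finset.card_eq_one.1 hcard1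
    have hw₀mem : w₀ ∈ E' \ cls a := hw₀ ▸ Finset.mem_singleton_self w₀
    have hw₀E : w₀ ∈ M.E := (hmemE w₀).1 (Finset.mem_sdiff.1 hw₀mem).1
    refine hcoloop w₀ hw₀E fun B hB => ?_
    by_contra hw₀B
    have hBsub : ∀ b ∈ B, b ∈ cls a := by
      intro b hbB
      have hbE : b ∈ M.E := hB.subset_ground hbB
      have hbE' : b ∈ E' := (hmemE b).2 hbE
      by_contra hbc
      have hbd : b ∈ E' \ cls a := Finset.mem_sdiff.2 ⟨hbE', hbc⟩
      rw [hw₀] at hbd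
      rw [Finset.mem_singleton.1 hbd] at hbB
      exact hw₀B hbB
    have hBle : B.ncard ≤ 1 := by
      refine hpair_le B hB.indep ?_
      intro b hb c hc
      have h1 := (hmem_cls a b).1 (hBsub b hb)
      have h2 := (hmem_cls a c).1 (hBsub c hc)
      exact htrans b a c ((hmemE b).1 h1.1) ((hmemE a).1 haE) ((hmemE c).1 h2.1)
        (hsymm a b h1.2) h2.2
    have hBenc : B.encard < ({u, v} : Set α).encard := by
      rw [Set.encard_pair huv]
      have hB1 : B.encard ≤ 1 := by
        rw [Set.encard_le_one_iff]
        intro b c hb hc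
        exact hpair_eq B hB.indep (fun b' hb' c' hc' => by
          have h1 := (hmem_cls a b').1 (hBsub b' hb')
          have h2 := (hmem_cls a c').1 (hBsub c' hc')
          exact htrans b' a c' ((hmemE b').1 h1.1) ((hmemE a).1 haE) ((hmemE c').1 h2.1)
            (hsymm a b' h1.2) h2.2) b hb c hc
      exact lt_of_le_of_lt hB1 (by exact_mod_cast Nat.one_lt_two)
    obtain ⟨z, hz, hzi⟩ := hB.indep.augment hJ hBenc
    exact (hB.insert_dep ⟨hJX hz.1, hz.2⟩).not_indep hzi
  -- apply the abstract convexity theorem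
  have habs := Tcx.abstract_convex E' C r hsub huniq hcover hk hsize hne hr0 hr1 hr2 (x₁ + y₁)
  have hx1m : x₁ ∈ Set.Icc (0:ℝ) (x₁+y₁) := ⟨hx₁, by linarith⟩
  have hx2m : x₂ ∈ Set.Icc (0:ℝ) (x₁+y₁) := ⟨hx₂, by linarith⟩
  have hineq := habs.2 hx1m hx2m ht0 (by linarith : (0:ℝ) ≤ 1 - t) (by ring)
  simp only [smul_eq_mul] at hineq
  have e1 : x₁ + y₁ - x₁ = y₁ := by ring
  have e2 : x₁ + y₁ - x₂ = y₂ := by linarith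
  have e3 : x₁ + y₁ - (t*x₁+(1-t)*x₂) = t*y₁+(1-t)*y₂ := by linear_combination (1-t)*hp
  rw [e1, e2, e3] at hineq
  have htt : ∀ x y : ℝ, M.tutte x y = Tcx.tsum E' r x y := by
    intro x y
    simp only [Matroid.tutte, Tcx.tsum, hrk, hr_def, hE'_def]
  rw [htt, htt, htt]
  exact hineq
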